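/- Let μ ∈ ℝ and σ > 0. Then E(x) = 2((x−μ)₊)²/σ² is a precise e-variable for H_US(μ,σ): (i) ∫ 2((x−μ)₊)²/σ² dQ(x) ≤ 1 for every Q ∈ H_US(μ,σ); and (ii) for every Q ∈ H_US(μ,σ) with mean exactly μ and variance exactly σ² (for instance the uniform distribution on [μ−√3σ, μ+√3σ]) one has ∫ 2((x−μ)₊)²/σ² dQ(x) = 1, so sup_{Q∈H_US(μ,σ)} ∫ 2((x−μ)₊)²/σ² dQ(x) = 1. -/

import Mathlib

open MeasureTheory Set
open scoped ENNReal

/-- Mean of a distribution on ℝ. -/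
noncomputable def distMean (Q : Measure ℝ) : ℝ := ∫ x, x ∂Q

/-- Variance of a distribution on ℝ. -/
noncomputable def distVar (Q : Measure ℝ) : ℝ := ∫ x, (x - distMean Q)^2 ∂Q

/-- `H(μ,σ)`: Borel probability measures on ℝ with finite second moment,
mean at most `μ`, and variance at most `σ²`. -/
def MemH (μ σ : ℝ) (Q : Measure ℝ) : Prop :=
  IsProbabilityMeasure Q ∧ Integrable (fun x => x^2) Q ∧
    distMean Q ≤ μ ∧ distVar Q ≤ σ^2

/-- A distribution `Q` with mean `m` is symmetric if
`Q((-∞, m−x]) = Q([m+x, ∞))` for all `x`. -/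
def IsSymmetricDist (Q : Measure ℝ) : Prop :=
  ∀ x : ℝ, Q (Iic (distMean Q - x)) = Q (Ici (distMean Q + x))

/-- A distribution on ℝ is unimodal: for some `x₀` it is a nonnegative multiple of
the Dirac mass at `x₀` plus a measure with a Lebesgue density that is nondecreasing
on `(-∞, x₀)` and nonincreasing on `(x₀, ∞)`. -/
def Unimodal (Q : Measure ℝ) : Prop :=
  ∃ (x₀ : ℝ) (c : ℝ≥0∞) (f : ℝ → ℝ≥0∞),
    Q = c • Measure.dirac x₀ + volume.withDensity f ∧
    MonotoneOn f (Iio x₀) ∧ AntitoneOn f (Ioi x₀)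

/-- The uniform distribution on `[μ − √3 σ, μ + √3 σ]`. -/
noncomputable def uniformU (μ σ : ℝ) : Measure ℝ :=
  ENNReal.ofReal (2 * Real.sqrt 3 * σ)⁻¹ •
    volume.restrict (Icc (μ - Real.sqrt 3 * σ) (μ + Real.sqrt 3 * σ))

lemma sqrt3_pos : (0:ℝ) < Real.sqrt 3 := Real.sqrt_pos.mpr (by norm_num)

lemma refl_map (Q : Measure ℝ) [IsProbabilityMeasure Q] (m : ℝ)
    (h : ∀ x, Q (Iic (m - x)) = Q (Ici (m + x))) :
    Measure.map (fun x => 2 * m - x) Q = Q := by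
  have hmeas : Measurable (fun x : ℝ => 2 * m - x) := measurable_const.sub measurable_id
  have : IsProbabilityMeasure (Measure.map (fun x => 2 * m - x) Q) :=
    Measure.isProbabilityMeasure_map hmeas.aemeasurable
  refine Measure.ext_of_Iic _ _ (fun a => ?_)
  rw [Measure.map_apply hmeas measurableSet_Iic]
  have hpre : (fun x : ℝ => 2 * m - x) ⁻¹' Iic a = Ici (2 * m - a) := by
    ext z; simp only [mem_preimage, mem_Iic, mem_Ici]; constructor <;> intro <;> linarith
  rw [hpre]
  have := h (m - a)
  simpa [show m - (m - a) = a by ring, show m + (m - a) = 2 * m - a by ring] using this.symm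

lemma integral_refl (Q : Measure ℝ) (m : ℝ)
    (hmap : Measure.map (fun x => 2 * m - x) Q = Q) (g : ℝ → ℝ) (hg : Continuous g) :
    ∫ x, g (2 * m - x) ∂Q = ∫ x, g x ∂Q := by
  have hmeas : Measurable (fun x : ℝ => 2 * m - x) := measurable_const.sub measurable_id
  conv_rhs => rw [← hmap]
  rw [integral_map hmeas.aemeasurable hg.aestronglyMeasurable]

lemma int_maxsq (Q : Measure ℝ) [IsProbabilityMeasure Q]
    (h2 : Integrable (fun x => x ^ 2) Q) (a : ℝ) :
    Integrable (fun x : ℝ => (max (x - a) 0) ^ 2) Q := by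
  have hgc : Continuous (fun x : ℝ => (max (x - a) 0) ^ 2) := by fun_prop
  have hbound : Integrable (fun x : ℝ => 2 * x ^ 2 + 2 * a ^ 2) Q :=
    (h2.const_mul 2).add (integrable_const _)
  refine hbound.mono' hgc.aestronglyMeasurable (Filter.Eventually.of_forall fun x => ?_)
  have h1 : (max (x - a) 0) ^ 2 ≤ (x - a) ^ 2 := by
    rcases le_total (x - a) 0 with h | h
    · simp [max_eq_right h, sq_nonneg]
    · simp [max_eq_left h]
  rw [Real.norm_eq_abs, abs_of_nonneg (by positivity)]
  nlinarith [sq_nonneg (x + a)]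

lemma half_var (Q : Measure ℝ) [IsProbabilityMeasure Q] (m : ℝ)
    (h2 : Integrable (fun x => x ^ 2) Q)
    (hmap : Measure.map (fun x => 2 * m - x) Q = Q) :
    2 * ∫ x, (max (x - m) 0) ^ 2 ∂Q = ∫ x, (x - m) ^ 2 ∂Q := by
  have hgc : Continuous (fun x : ℝ => (max (x - m) 0) ^ 2) := by fun_prop
  have hbound : Integrable (fun x : ℝ => 2 * x ^ 2 + 2 * m ^ 2) Q :=
    (h2.const_mul 2).add (integrable_const _)
  have hint1 : Integrable (fun x : ℝ => (max (x - m) 0) ^ 2) Q := int_maxsq Q h2 m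
  have hint2 : Integrable (fun x : ℝ => (max (m - x) 0) ^ 2) Q := by
    have hc : Continuous (fun x : ℝ => (max (m - x) 0) ^ 2) := by fun_prop
    refine hbound.mono' hc.aestronglyMeasurable (Filter.Eventually.of_forall fun x => ?_)
    have h1 : (max (m - x) 0) ^ 2 ≤ (x - m) ^ 2 := by
      rcases le_total (m - x) 0 with h | h
      · simp [max_eq_right h, sq_nonneg]
      · rw [max_eq_left h]; nlinarith
    rw [Real.norm_eq_abs, abs_of_nonneg (by positivity)]
    nlinarith [sq_nonneg (x + m)]
  have hrefl : ∫ x, (max (m - x) 0) ^ 2 ∂Q = ∫ x, (max (x - m) 0) ^ 2 ∂Q := by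
    have := integral_refl Q m hmap (fun x => (max (x - m) 0) ^ 2) hgc
    simpa [show ∀ x : ℝ, 2 * m - x - m = m - x from fun x => by ring] using this
  have hsum : ∫ x, ((max (x - m) 0) ^ 2 + (max (m - x) 0) ^ 2) ∂Q = ∫ x, (x - m) ^ 2 ∂Q := by
    refine integral_congr_ae (Filter.Eventually.of_forall fun x => ?_)
    dsimp only
    rcases le_total m x with h | h
    · rw [max_eq_left (by linarith), max_eq_right (by linarith)]; ring
    · rw [max_eq_right (by linarith), max_eq_left (by linarith)]; nlinarith
  rw [← hsum, integral_add hint1 hint2, hrefl]; ring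

lemma main_le (Q : Measure ℝ) [IsProbabilityMeasure Q]
    (h2 : Integrable (fun x => x ^ 2) Q)
    (hmap : Measure.map (fun x => 2 * distMean Q - x) Q = Q)
    (μ σ : ℝ) (hm : distMean Q ≤ μ) (hσ : 0 < σ) :
    ∫ x, 2 * (max (x - μ) 0) ^ 2 / σ ^ 2 ∂Q ≤ distVar Q / σ ^ 2 := by
  set m := distMean Q with hm'
  have half := half_var Q m h2 hmap
  have hI1 := int_maxsq Q h2 μ
  have hI2 := int_maxsq Q h2 m
  have hmono : ∫ x, (max (x - μ) 0) ^ 2 ∂Q ≤ ∫ x, (max (x - m) 0) ^ 2 ∂Q := by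
    refine integral_mono hI1 hI2 (fun x => ?_)
    have h1 : max (x - μ) 0 ≤ max (x - m) 0 := max_le_max (by linarith) le_rfl
    exact pow_le_pow_left₀ (le_max_right _ _) h1 2
  have hrw : ∀ x : ℝ, 2 * (max (x - μ) 0) ^ 2 / σ ^ 2 = (2 / σ ^ 2) * (max (x - μ) 0) ^ 2 :=
    fun x => by ring
  simp_rw [hrw]
  rw [integral_const_mul]
  have hvar : ∫ x, (x - m) ^ 2 ∂Q = distVar Q := rfl
  calc (2 / σ ^ 2) * ∫ x, (max (x - μ) 0) ^ 2 ∂Q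
      ≤ (2 / σ ^ 2) * ∫ x, (max (x - m) 0) ^ 2 ∂Q := by
        apply mul_le_mul_of_nonneg_left hmono (by positivity)
    _ = distVar Q / σ ^ 2 := by rw [← hvar, ← half]; ring

lemma main_eq (Q : Measure ℝ) [IsProbabilityMeasure Q]
    (h2 : Integrable (fun x => x ^ 2) Q)
    (hmap : Measure.map (fun x => 2 * distMean Q - x) Q = Q)
    (μ σ : ℝ) (hm : distMean Q = μ) (hσ : 0 < σ) :
    ∫ x, 2 * (max (x - μ) 0) ^ 2 / σ ^ 2 ∂Q = distVar Q / σ ^ 2 := by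
  subst hm
  set m := distMean Q with hm'
  have half := half_var Q m h2 hmap
  have hrw : ∀ x : ℝ, 2 * (max (x - m) 0) ^ 2 / σ ^ 2 = (2 / σ ^ 2) * (max (x - m) 0) ^ 2 :=
    fun x => by ring
  simp_rw [hrw]
  rw [integral_const_mul]
  have hvar : ∫ x, (x - m) ^ 2 ∂Q = distVar Q := rfl
  rw [← hvar, ← half]; field_simp

lemma uniform_integral (μ σ : ℝ) (hσ : 0 < σ) (f : ℝ → ℝ) :
    ∫ x, f x ∂(uniformU μ σ) =
      (2 * Real.sqrt 3 * σ)⁻¹ *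
        ∫ x in (μ - Real.sqrt 3 * σ)..(μ + Real.sqrt 3 * σ), f x := by
  have hs : 0 < Real.sqrt 3 * σ := mul_pos sqrt3_pos hσ
  have hab : μ - Real.sqrt 3 * σ ≤ μ + Real.sqrt 3 * σ := by linarith
  rw [uniformU, integral_smul_measure, ENNReal.toReal_ofReal (by positivity),
    MeasureTheory.integral_Icc_eq_integral_Ioc, ← intervalIntegral.integral_of_le hab,
    smul_eq_mul]

lemma uniform_prob (μ σ : ℝ) (hσ : 0 < σ) : IsProbabilityMeasure (uniformU μ σ) := by
  have hs : 0 < Real.sqrt 3 * σ := mul_pos sqrt3_pos hσ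
  constructor
  rw [uniformU, Measure.smul_apply, Measure.restrict_apply MeasurableSet.univ, univ_inter,
    Real.volume_Icc, smul_eq_mul, ← ENNReal.ofReal_mul (by positivity)]
  rw [show μ + Real.sqrt 3 * σ - (μ - Real.sqrt 3 * σ) = 2 * Real.sqrt 3 * σ by ring]
  rw [inv_mul_cancel₀ (by positivity), ENNReal.ofReal_one]

lemma uniform_mean (μ σ : ℝ) (hσ : 0 < σ) : distMean (uniformU μ σ) = μ := by
  have ht : (0:ℝ) < Real.sqrt 3 * σ := mul_pos sqrt3_pos hσ
  rw [distMean, uniform_integral μ σ hσ, integral_id]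
  set t := Real.sqrt 3 * σ
  field_simp
  ring

lemma uniform_var (μ σ : ℝ) (hσ : 0 < σ) : distVar (uniformU μ σ) = σ ^ 2 := by
  have ht : (0:ℝ) < Real.sqrt 3 * σ := mul_pos sqrt3_pos hσ
  have ht2 : (Real.sqrt 3 * σ) ^ 2 = 3 * σ ^ 2 := by
    rw [mul_pow, Real.sq_sqrt (by norm_num)]
  rw [distVar, uniform_mean μ σ hσ, uniform_integral μ σ hσ,
    intervalIntegral.integral_comp_sub_right (fun x => x ^ 2) μ]
  rw [show μ - Real.sqrt 3 * σ - μ = -(Real.sqrt 3 * σ) by ring,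
    show μ + Real.sqrt 3 * σ - μ = Real.sqrt 3 * σ by ring, integral_pow]
  set t := Real.sqrt 3 * σ with hT
  rw [show 2 * Real.sqrt 3 * σ = 2 * t by rw [hT]; ring]
  have h3 : t ^ 3 = 3 * σ ^ 2 * t := by
    have h4 : t ^ 3 = t ^ 2 * t := by ring
    rw [h4, ht2]
  push_cast
  field_simp
  linarith [h3]

lemma uniform_symm (μ σ : ℝ) (hσ : 0 < σ) :
    ∀ x : ℝ, uniformU μ σ (Iic (μ - x)) = uniformU μ σ (Ici (μ + x)) := by
  intro x
  have ht : (0:ℝ) < Real.sqrt 3 * σ := mul_pos sqrt3_pos hσ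
  set t := Real.sqrt 3 * σ with hT
  have h1 : Iic (μ - x) ∩ Icc (μ - t) (μ + t) = Icc (μ - t) (min (μ + t) (μ - x)) := by
    ext z; simp only [mem_inter_iff, mem_Iic, mem_Icc, le_min_iff]; tauto
  have h2 : Ici (μ + x) ∩ Icc (μ - t) (μ + t) = Icc (max (μ - t) (μ + x)) (μ + t) := by
    ext z; simp only [mem_inter_iff, mem_Ici, mem_Icc, max_le_iff]; tauto
  rw [uniformU, Measure.smul_apply, Measure.smul_apply,
    Measure.restrict_apply measurableSet_Iic, Measure.restrict_apply measurableSet_Ici,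
    ← hT, h1, h2, Real.volume_Icc, Real.volume_Icc]
  congr 2
  rcases le_total (μ + t) (μ - x) with h | h <;> rcases le_total (μ - t) (μ + x) with h' | h' <;>
    simp [min_eq_left, min_eq_right, max_eq_left, max_eq_right, h, h'] <;> linarith

lemma uniform_unimodal (μ σ : ℝ) (hσ : 0 < σ) : Unimodal (uniformU μ σ) := by
  have ht : (0:ℝ) < Real.sqrt 3 * σ := mul_pos sqrt3_pos hσ
  set t := Real.sqrt 3 * σ with hT
  set c := ENNReal.ofReal (2 * Real.sqrt 3 * σ)⁻¹ with hc
  refine ⟨μ, 0, (Icc (μ - t) (μ + t)).indicator (fun _ => c), ?_, ?_, ?_⟩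
  · rw [withDensity_indicator measurableSet_Icc, withDensity_const, zero_smul, zero_add,
      uniformU]
  · intro x hx y hy hxy
    by_cases h : x ∈ Icc (μ - t) (μ + t)
    · have hy' : y ∈ Icc (μ - t) (μ + t) := by
        simp only [mem_Icc] at h ⊢
        exact ⟨h.1.trans hxy, by have := mem_Iio.mp hy; linarith⟩
      rw [indicator_of_mem h, indicator_of_mem hy']
    · rw [indicator_of_notMem h]
      exact zero_le
  · intro x hx y hy hxy
    by_cases h : y ∈ Icc (μ - t) (μ + t)
    · have hx' : x ∈ Icc (μ - t) (μ + t) := by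
        simp only [mem_Icc] at h ⊢
        exact ⟨by have := mem_Ioi.mp hx; linarith, hxy.trans h.2⟩
      rw [indicator_of_mem h, indicator_of_mem hx']
    · rw [indicator_of_notMem h]
      exact zero_le

lemma uniform_integrable_sq (μ σ : ℝ) :
    Integrable (fun x => x ^ 2) (uniformU μ σ) := by
  rw [uniformU]
  refine Integrable.smul_measure ?_ ENNReal.ofReal_ne_top
  exact (continuous_pow 2).integrableOn_Icc

lemma uniform_memH (μ σ : ℝ) (hσ : 0 < σ) : MemH μ σ (uniformU μ σ) :=
  ⟨uniform_prob μ σ hσ, uniform_integrable_sq μ σ,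
    le_of_eq (uniform_mean μ σ hσ), le_of_eq (uniform_var μ σ hσ)⟩

lemma uniform_symmDist (μ σ : ℝ) (hσ : 0 < σ) : IsSymmetricDist (uniformU μ σ) := by
  intro x
  rw [uniform_mean μ σ hσ]
  exact uniform_symm μ σ hσ x

/-- `E(x) = 2((x−μ)₊)²/σ²` is a precise e-variable for `H_US(μ,σ)`:
(i) `∫ E dQ ≤ 1` for all `Q ∈ H_US(μ,σ)`; (ii) `∫ E dQ = 1` for every
`Q ∈ H_US(μ,σ)` with mean exactly `μ` and variance exactly `σ²`, for instance the
uniform distribution on `[μ−√3σ, μ+√3σ]`; hence the sup equals `1`. -/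
theorem stmt_16 (μ σ : ℝ) (hσ : 0 < σ) :
    (∀ Q : Measure ℝ, MemH μ σ Q → IsSymmetricDist Q → Unimodal Q →
      ∫ x, 2 * (max (x - μ) 0)^2 / σ^2 ∂Q ≤ 1) ∧
    (∀ Q : Measure ℝ, MemH μ σ Q → IsSymmetricDist Q → Unimodal Q →
      distMean Q = μ → distVar Q = σ^2 →
      ∫ x, 2 * (max (x - μ) 0)^2 / σ^2 ∂Q = 1) ∧
    (MemH μ σ (uniformU μ σ) ∧ IsSymmetricDist (uniformU μ σ) ∧
      Unimodal (uniformU μ σ) ∧ distMean (uniformU μ σ) = μ ∧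
      distVar (uniformU μ σ) = σ^2 ∧
      ∫ x, 2 * (max (x - μ) 0)^2 / σ^2 ∂(uniformU μ σ) = 1) ∧
    IsLUB {r : ℝ | ∃ Q : Measure ℝ, MemH μ σ Q ∧ IsSymmetricDist Q ∧ Unimodal Q ∧
      r = ∫ x, 2 * (max (x - μ) 0)^2 / σ^2 ∂Q} 1 := by
  have part1 : ∀ Q : Measure ℝ, MemH μ σ Q → IsSymmetricDist Q → Unimodal Q →
      ∫ x, 2 * (max (x - μ) 0)^2 / σ^2 ∂Q ≤ 1 := by
    rintro Q ⟨hprob, h2, hmle, hvle⟩ hsym _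
    haveI := hprob
    have hmap := refl_map Q (distMean Q) hsym
    have hle := main_le Q h2 hmap μ σ hmle hσ
    have h1 : distVar Q / σ ^ 2 ≤ 1 := by
      rw [div_le_one (by positivity)]; exact hvle
    linarith
  have part2 : ∀ Q : Measure ℝ, MemH μ σ Q → IsSymmetricDist Q → Unimodal Q →
      distMean Q = μ → distVar Q = σ^2 →
      ∫ x, 2 * (max (x - μ) 0)^2 / σ^2 ∂Q = 1 := by
    rintro Q ⟨hprob, h2, _, _⟩ hsym _ hmean hvar
    haveI := hprob
    have hmap := refl_map Q (distMean Q) hsym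
    rw [main_eq Q h2 hmap μ σ hmean hσ, hvar, div_self (by positivity)]
  have hu := uniform_memH μ σ hσ
  have hus := uniform_symmDist μ σ hσ
  have huu := uniform_unimodal μ σ hσ
  have humean := uniform_mean μ σ hσ
  have huvar := uniform_var μ σ hσ
  have hueq := part2 _ hu hus huu humean huvar
  refine ⟨part1, part2, ⟨hu, hus, huu, humean, huvar, hueq⟩, ?_, ?_⟩
  · rintro r ⟨Q, hQ, hs, hun, rfl⟩
    exact part1 Q hQ hs hun
  · intro b hb
    exact hb ⟨uniformU μ σ, hu, hus, huu, hueq.symm⟩
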